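/- Let N ∈ ℕ and let G ≤ Homeo(ℝ) be an abelian subgroup such that every non-identity element of G has at most N fixed points. If there exists a non-identity element f ∈ G with Fix(f) ≠ ∅, then every minimal invariant subset of the action of G is finite; moreover, for every non-identity element f ∈ G with Fix(f) ≠ ∅ there exists a minimal invariant subset contained in Fix(f). -/

import Mathlib

open Function Set Filter Topology

/-- The group of homeomorphisms of the real line, with `(f * g) x = f (g x)`. -/
abbrev HomeoR : Type := ℝ ≃ₜ ℝ

instance : Group HomeoR where
  mul f g := g.trans f
  one := Homeomorph.refl ℝ
  inv := Homeomorph.symm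
  mul_assoc _ _ _ := rfl
  one_mul f := by ext x; rfl
  mul_one f := by ext x; rfl
  inv_mul_cancel f := by ext x; exact f.symm_apply_apply x

@[simp] lemma HomeoR.mul_apply (f g : HomeoR) (x : ℝ) : (f * g) x = f (g x) := rfl
@[simp] lemma HomeoR.one_apply (x : ℝ) : (1 : HomeoR) x = x := rfl
@[simp] lemma HomeoR.inv_eq_symm (f : HomeoR) : f⁻¹ = f.symm := rfl

/-- The subgroup of orientation-preserving homeomorphisms of the line,
i.e. strictly increasing ones. -/
def HomeoPlus : Subgroup HomeoR where
  carrier := {f | StrictMono (f : ℝ → ℝ)}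
  one_mem' := strictMono_id
  mul_mem' hf hg := hf.comp hg
  inv_mem' := by
    intro f hf a b hab
    have h := hf.lt_iff_lt (a := f.symm a) (b := f.symm b)
    rw [f.apply_symm_apply, f.apply_symm_apply] at h
    exact h.mp hab

/-- `G` has at most `N` fixed points: every non-identity element fixes at most `N` points. -/
def HasAtMostNFixedPoints (G : Subgroup HomeoR) (N : ℕ) : Prop :=
  ∀ g ∈ G, g ≠ 1 → ∃ S : Finset ℝ, S.card ≤ N ∧ ∀ x : ℝ, g x = x → x ∈ S

/-- A continuous non-decreasing map `ℝ → ℝ` which is proper. -/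
def MonotoneProper (h : ℝ → ℝ) : Prop :=
  Continuous h ∧ Monotone h ∧ Tendsto h atTop atTop ∧ Tendsto h atBot atBot

/-- The action of `G` is (positively) semi-conjugate to the action of `F`. -/
def IsSemiConjTo (G F : Subgroup HomeoR) : Prop :=
  ∃ (θ : G →* F) (h : ℝ → ℝ), Surjective θ ∧ MonotoneProper h ∧
    ∀ g : G, ∀ x : ℝ, (θ g : HomeoR) (h x) = h ((g : HomeoR) x)

def IsAffineHomeo (f : HomeoR) : Prop := ∃ a b : ℝ, a ≠ 0 ∧ ∀ x : ℝ, f x = a * x + b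

def IsTranslationHomeo (f : HomeoR) : Prop := ∃ b : ℝ, ∀ x : ℝ, f x = x + b

def IsIsometryHomeo (f : HomeoR) : Prop :=
  ∃ b : ℝ, (∀ x : ℝ, f x = x + b) ∨ (∀ x : ℝ, f x = -x + b)

def IsInvariantSet (G : Subgroup HomeoR) (S : Set ℝ) : Prop :=
  ∀ g ∈ G, ∀ x ∈ S, (g : HomeoR) x ∈ S

/-- A minimal invariant set: nonempty, closed, invariant, with no proper
nonempty closed invariant subset. -/
def IsMinimalInvariant (G : Subgroup HomeoR) (M : Set ℝ) : Prop :=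
  M.Nonempty ∧ IsClosed M ∧ IsInvariantSet G M ∧
    ∀ S : Set ℝ, S ⊆ M → S.Nonempty → IsClosed S → IsInvariantSet G S → S = M

def orbitSet (G : Subgroup HomeoR) (x : ℝ) : Set ℝ := {y | ∃ g ∈ G, (g : HomeoR) x = y}

section Aux

/-- The inverse of a strictly monotone homeomorphism is strictly monotone. -/
lemma strictMono_symm_aux (f : HomeoR) (hf : StrictMono (f : ℝ → ℝ)) :
    StrictMono (f.symm : ℝ → ℝ) := by
  intro a b hab
  have h := hf.lt_iff_lt (a := f.symm a) (b := f.symm b)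
  rw [f.apply_symm_apply, f.apply_symm_apply] at h
  exact h.mp hab

/-- Fixed point sets of elements of an abelian group are invariant. -/
lemma fix_invariant_aux (G : Subgroup HomeoR)
    (hab : ∀ a ∈ G, ∀ b ∈ G, a * b = b * a)
    (f : HomeoR) (hf : f ∈ G) : IsInvariantSet G {x : ℝ | f x = x} := by
  intro g hg x hx
  have h : (f * g) x = (g * f) x := by rw [hab f hf g hg]
  simp only [HomeoR.mul_apply] at h
  simp only [Set.mem_setOf_eq] at hx ⊢
  rw [h, hx]

/-- Decreasing iteration converges to a fixed point inside a closed invariant set. -/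
lemma descend_aux (M : Set ℝ) (hMc : IsClosed M) (h : HomeoR)
    (hmem : ∀ y ∈ M, h y ∈ M) (hm : StrictMono (h : ℝ → ℝ)) {x t : ℝ}
    (hxM : x ∈ M) (ht : h t = t) (htx : t < x) (hhx : h x < x) :
    ∃ L ∈ M, h L = L := by
  set u : ℕ → ℝ := fun n => (h : ℝ → ℝ)^[n] x with hu
  have husucc : ∀ n, u (n + 1) = h (u n) := fun n => Function.iterate_succ_apply' _ n x
  have hdec : ∀ n, u (n + 1) < u n := by
    intro n
    induction n with
    | zero => exact hhx
    | succ k ih =>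
      have h2 := hm ih
      rw [← husucc, ← husucc] at h2
      exact h2
  have hgt : ∀ n, t < u n := by
    intro n
    induction n with
    | zero => exact htx
    | succ k ih =>
      have h2 := hm ih
      rw [ht, ← husucc] at h2
      exact h2
  have huM : ∀ n, u n ∈ M := by
    intro n
    induction n with
    | zero => exact hxM
    | succ k ih => rw [husucc]; exact hmem _ ih
  have hanti : Antitone u := (strictAnti_nat_of_succ_lt hdec).antitone
  have hbdd : BddBelow (Set.range u) := by
    refine ⟨t, ?_⟩
    rintro y ⟨n, rfl⟩
    exact (hgt n).le
  have hlim : Filter.Tendsto u Filter.atTop (nhds (⨅ n, u n)) :=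
    tendsto_atTop_ciInf hanti hbdd
  refine ⟨⨅ n, u n, hMc.mem_of_tendsto hlim (Filter.Eventually.of_forall huM), ?_⟩
  have h1 : Filter.Tendsto (fun n => h (u n)) Filter.atTop (nhds (h (⨅ n, u n))) :=
    (h.continuous.tendsto _).comp hlim
  have h2 : Filter.Tendsto (fun n => u (n + 1)) Filter.atTop (nhds (⨅ n, u n)) :=
    hlim.comp (Filter.tendsto_add_atTop_nat 1)
  have heq : (fun n => h (u n)) = fun n => u (n + 1) := by
    funext n; exact (husucc n).symm
  rw [heq] at h1
  exact tendsto_nhds_unique h1 h2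

/-- Increasing iteration converges to a fixed point inside a closed invariant set. -/
lemma ascend_aux (M : Set ℝ) (hMc : IsClosed M) (h : HomeoR)
    (hmem : ∀ y ∈ M, h y ∈ M) (hm : StrictMono (h : ℝ → ℝ)) {x t : ℝ}
    (hxM : x ∈ M) (ht : h t = t) (htx : x < t) (hhx : x < h x) :
    ∃ L ∈ M, h L = L := by
  set u : ℕ → ℝ := fun n => (h : ℝ → ℝ)^[n] x with hu
  have husucc : ∀ n, u (n + 1) = h (u n) := fun n => Function.iterate_succ_apply' _ n x
  have hdec : ∀ n, u n < u (n + 1) := by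
    intro n
    induction n with
    | zero => exact hhx
    | succ k ih =>
      have h2 := hm ih
      rw [← husucc, ← husucc] at h2
      exact h2
  have hgt : ∀ n, u n < t := by
    intro n
    induction n with
    | zero => exact htx
    | succ k ih =>
      have h2 := hm ih
      rw [ht, ← husucc] at h2
      exact h2
  have huM : ∀ n, u n ∈ M := by
    intro n
    induction n with
    | zero => exact hxM
    | succ k ih => rw [husucc]; exact hmem _ ih
  have hmono : Monotone u := (strictMono_nat_of_lt_succ hdec).monotone
  have hbdd : BddAbove (Set.range u) := by
    refine ⟨t, ?_⟩
    rintro y ⟨n, rfl⟩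
    exact (hgt n).le
  have hlim : Filter.Tendsto u Filter.atTop (nhds (⨆ n, u n)) :=
    tendsto_atTop_ciSup hmono hbdd
  refine ⟨⨆ n, u n, hMc.mem_of_tendsto hlim (Filter.Eventually.of_forall huM), ?_⟩
  have h1 : Filter.Tendsto (fun n => h (u n)) Filter.atTop (nhds (h (⨆ n, u n))) :=
    (h.continuous.tendsto _).comp hlim
  have h2 : Filter.Tendsto (fun n => u (n + 1)) Filter.atTop (nhds (⨆ n, u n)) :=
    hlim.comp (Filter.tendsto_add_atTop_nat 1)
  have heq : (fun n => h (u n)) = fun n => u (n + 1) := by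
    funext n; exact (husucc n).symm
  rw [heq] at h1
  exact tendsto_nhds_unique h1 h2

/-- A fixed-point-free homeomorphism moves all points in the same direction. -/
lemma pos_or_neg_aux (g : HomeoR) (h : ∀ x : ℝ, g x ≠ x) :
    (∀ x : ℝ, x < g x) ∨ (∀ x : ℝ, g x < x) := by
  by_contra hc
  push_neg at hc
  obtain ⟨⟨a, ha⟩, ⟨b, hb⟩⟩ := hc
  have ha' : g a < a := lt_of_le_of_ne ha (h a)
  have hb' : b < g b := lt_of_le_of_ne hb (Ne.symm (h b))
  set φ : ℝ → ℝ := fun y => g y - y with hφ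
  have hφc : Continuous φ := g.continuous.sub continuous_id
  have hφa : φ a < 0 := by simp [hφ, sub_neg]; exact ha'
  have hφb : 0 < φ b := by simp [hφ, sub_pos]; exact hb'
  rcases le_total a b with hab | hba
  · obtain ⟨c, _, hc0⟩ := intermediate_value_Icc hab hφc.continuousOn
      (Set.mem_Icc.mpr ⟨hφa.le, hφb.le⟩)
    exact h c (by simpa [hφ, sub_eq_zero] using hc0)
  · obtain ⟨c, _, hc0⟩ := intermediate_value_Icc' hba hφc.continuousOn
      (Set.mem_Icc.mpr ⟨hφa.le, hφb.le⟩)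
    exact h c (by simpa [hφ, sub_eq_zero] using hc0)

/-- If `G` contains an increasing non-trivial element with a fixed point, every
minimal invariant set is finite. -/
lemma minimal_finite_of_inc_aux (N : ℕ) (G : Subgroup HomeoR)
    (hab : ∀ a ∈ G, ∀ b ∈ G, a * b = b * a)
    (hG : HasAtMostNFixedPoints G N)
    (g : HomeoR) (hg : g ∈ G) (hg1 : g ≠ 1) (hmono : StrictMono (g : ℝ → ℝ))
    (p : ℝ) (hp : g p = p)
    (M : Set ℝ) (hM : IsMinimalInvariant G M) : M.Finite := by
  obtain ⟨S, _, hS⟩ := hG g hg hg1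
  obtain ⟨hMne, hMc, hMinv, hMmin⟩ := hM
  obtain ⟨x, hxM⟩ := hMne
  have hmem : ∀ y ∈ M, g y ∈ M := fun y hy => hMinv g hg y hy
  have hmem' : ∀ y ∈ M, g.symm y ∈ M := by
    intro y hy
    have := hMinv g⁻¹ (inv_mem hg) y hy
    simpa using this
  have hsymm_mono : StrictMono (g.symm : ℝ → ℝ) := strictMono_symm_aux g hmono
  have hps : g.symm p = p := by
    conv_lhs => rw [← hp]
    exact g.symm_apply_apply p
  have hKey : ∃ L ∈ M, g L = L := by
    rcases eq_or_ne (g x) x with hgx | hgx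
    · exact ⟨x, hxM, hgx⟩
    rcases lt_trichotomy p x with htx | htx | htx
    · rcases lt_or_gt_of_ne hgx with hlt | hgt
      · exact descend_aux M hMc g hmem hmono hxM hp htx hlt
      · have hx' : g.symm x < x := by
          have := hsymm_mono hgt
          rwa [g.symm_apply_apply] at this
        obtain ⟨L, hLM, hL⟩ := descend_aux M hMc g.symm hmem' hsymm_mono hxM hps htx hx'
        refine ⟨L, hLM, ?_⟩
        conv_lhs => rw [← hL]
        exact g.apply_symm_apply L
    · exact ⟨x, hxM, by rw [← htx, hp]⟩
    · rcases lt_or_gt_of_ne hgx with hlt | hgt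
      · have hx' : x < g.symm x := by
          have := hsymm_mono hlt
          rwa [g.symm_apply_apply] at this
        obtain ⟨L, hLM, hL⟩ := ascend_aux M hMc g.symm hmem' hsymm_mono hxM hps htx hx'
        refine ⟨L, hLM, ?_⟩
        conv_lhs => rw [← hL]
        exact g.apply_symm_apply L
      · exact ascend_aux M hMc g hmem hmono hxM hp htx hgt
  obtain ⟨L, hLM, hgL⟩ := hKey
  set K : Set ℝ := M ∩ {y : ℝ | g y = y} with hK
  have hKM : K = M := by
    refine hMmin K Set.inter_subset_left ⟨L, hLM, hgL⟩
      (hMc.inter (isClosed_eq g.continuous continuous_id)) ?_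
    intro g' hg' y hy
    exact ⟨hMinv g' hg' y hy.1, fix_invariant_aux G hab g hg g' hg' y hy.2⟩
  have hsub : M ⊆ {y : ℝ | g y = y} := by
    rw [← hKM]; exact Set.inter_subset_right
  exact Set.Finite.subset S.finite_toSet (fun y hy => hS y (hsub hy))

/-- Every finite nonempty invariant set contains a minimal invariant set. -/
lemma exists_min_aux (G : Subgroup HomeoR) :
    ∀ n : ℕ, ∀ F : Set ℝ, F.Finite → F.ncard ≤ n → F.Nonempty → IsInvariantSet G F →
      ∃ M : Set ℝ, M ⊆ F ∧ IsMinimalInvariant G M := by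
  intro n
  induction n with
  | zero =>
    intro F hFin hcard hne _
    have := (Set.ncard_pos hFin).mpr hne
    omega
  | succ n ih =>
    intro F hFin hcard hne hinv
    by_cases hmin : ∀ S : Set ℝ, S ⊆ F → S.Nonempty → IsClosed S → IsInvariantSet G S → S = F
    · exact ⟨F, subset_rfl, hne, hFin.isClosed, hinv, hmin⟩
    · push_neg at hmin
      obtain ⟨S, hSF, hSne, _, hSinv, hSneF⟩ := hmin
      have hss : S ⊂ F := ssubset_of_subset_of_ne hSF hSneF
      have hlt : S.ncard < F.ncard := Set.ncard_lt_ncard hss hFin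
      obtain ⟨M, hMS, hMmin⟩ := ih S (hFin.subset hSF) (by omega) hSne hSinv
      exact ⟨M, hMS.trans hSF, hMmin⟩

end Aux

/-- For an abelian group with at most `N` fixed points containing a non-trivial element
with a fixed point, every minimal invariant subset is finite, and every non-trivial element
with a fixed point has a minimal invariant subset inside its fixed point set. -/
theorem abelian_minimal_finite (N : ℕ) (G : Subgroup HomeoR)
    (hab : ∀ a ∈ G, ∀ b ∈ G, a * b = b * a)
    (hG : HasAtMostNFixedPoints G N)
    (hex : ∃ f ∈ G, f ≠ 1 ∧ ∃ x : ℝ, f x = x) :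
    (∀ M : Set ℝ, IsMinimalInvariant G M → M.Finite) ∧
    ∀ f ∈ G, f ≠ 1 → (∃ x : ℝ, f x = x) →
      ∃ M : Set ℝ, M ⊆ {x : ℝ | f x = x} ∧ IsMinimalInvariant G M := by
  constructor
  · -- every minimal invariant set is finite
    intro M hM
    obtain ⟨f, hfG, hf1, p, hp⟩ := hex
    rcases f.continuous.strictMono_of_inj f.injective with hmono | hanti
    · exact minimal_finite_of_inc_aux N G hab hG f hfG hf1 hmono p hp M hM
    · by_cases hg : ∃ g ∈ G, g ≠ 1 ∧ StrictMono (g : ℝ → ℝ)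
      · obtain ⟨g, hgG, hg1, hgm⟩ := hg
        have hfp : ∃ q : ℝ, g q = q := by
          by_contra hq
          push_neg at hq
          have hcomm : ∀ y : ℝ, f (g y) = g (f y) := by
            intro y
            have h := congrArg (fun (h : HomeoR) => h y) (hab f hfG g hgG)
            simpa using h
          rcases pos_or_neg_aux g hq with hup | hdn
          · have h1 : f (g 0) < f 0 := hanti (hup 0)
            have h2 : f 0 < g (f 0) := hup (f 0)
            rw [hcomm 0] at h1
            exact absurd (h1.trans h2) (lt_irrefl _)
          · have h1 : f 0 < f (g 0) := hanti (hdn 0)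
            have h2 : g (f 0) < f 0 := hdn (f 0)
            rw [hcomm 0] at h1
            exact absurd (h2.trans h1) (lt_irrefl _)
        obtain ⟨q, hq⟩ := hfp
        exact minimal_finite_of_inc_aux N G hab hG g hgG hg1 hgm q hq M hM
      · push_neg at hg
        have hmono_one : ∀ h : HomeoR, h ∈ G → StrictMono (h : ℝ → ℝ) → h = 1 := by
          intro h hh hm
          by_contra hne
          exact hg h hh hne hm
        have hff : f * f = 1 := by
          refine hmono_one (f * f) (mul_mem hfG hfG) ?_
          have : StrictMono ((f : ℝ → ℝ) ∘ (f : ℝ → ℝ)) := hanti.comp hanti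
          exact this
        have hGf : ∀ h : HomeoR, h ∈ G → h = 1 ∨ h = f := by
          intro h hh
          rcases h.continuous.strictMono_of_inj h.injective with hm | ha
          · exact Or.inl (hmono_one h hh hm)
          · right
            have hhf : h * f = 1 := by
              refine hmono_one (h * f) (mul_mem hh hfG) ?_
              have : StrictMono ((h : ℝ → ℝ) ∘ (f : ℝ → ℝ)) := ha.comp hanti
              exact this
            have h1 : h = f⁻¹ := eq_inv_of_mul_eq_one_left hhf
            have h2 : f⁻¹ = f := inv_eq_of_mul_eq_one_right hff
            rw [h1, h2]
        obtain ⟨hMne, hMc, hMinv, hMmin⟩ := hM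
        obtain ⟨x, hxM⟩ := hMne
        have hffx : f (f x) = x := by
          have := congrArg (fun (h : HomeoR) => h x) hff
          simpa using this
        have hSM : ({x, f x} : Set ℝ) = M := by
          refine hMmin {x, f x} ?_ ⟨x, by simp⟩ (Set.Finite.isClosed (by simp)) ?_
          · intro y hy
            rcases hy with rfl | hy
            · exact hxM
            · simp only [Set.mem_singleton_iff] at hy
              subst hy
              exact hMinv f hfG x hxM
          · intro g' hg' y hy
            rcases hGf g' hg' with rfl | rfl
            · simpa using hy
            · rcases hy with rfl | hy
              · simp
              · simp only [Set.mem_singleton_iff] at hy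
                subst hy
                rw [hffx]
                simp
        rw [← hSM]
        simp
  · -- minimal invariant set inside the fixed point set
    intro f hfG hf1 hfx
    obtain ⟨p, hp⟩ := hfx
    obtain ⟨S, _, hS⟩ := hG f hfG hf1
    set F : Set ℝ := {x : ℝ | f x = x} with hF
    have hFfin : F.Finite := Set.Finite.subset S.finite_toSet (fun y hy => hS y hy)
    obtain ⟨M, hMF, hMmin⟩ := exists_min_aux G F.ncard F hFfin le_rfl ⟨p, hp⟩
      (fix_invariant_aux G hab f hfG)
    exact ⟨M, hMF, hMmin⟩
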